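/- Let p > 3 be a prime. For the one-parameter family y² = x³ − t x² + (x − 1) t², the first-moment sum satisfies: ∑_{t mod p} a_t(p) = −2p if p ≡ 1 (mod 12), ∑_{t mod p} a_t(p) = 2p if p ≡ 7 (mod 12), and ∑_{t mod p} a_t(p) = 0 for all other primes p > 3, where a_t(p) := −∑_{x mod p} χ(x³ − t x² + x t² − t²). -/

import Mathlib

open Finset

section Aux

variable {p : ℕ} [Fact p.Prime]

local notation "χ" => quadraticChar (ZMod p)

private lemma hFc (hp2 : p ≠ 2) : ringChar (ZMod p) ≠ 2 := by
  rw [ZMod.ringChar_zmod_n]; exact hp2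

private lemma chi_shift (c : ZMod p) (hp2 : p ≠ 2) :
    ∑ v : ZMod p, χ (v - c) = 0 := by
  have h : ∑ v : ZMod p, χ (v - c) = ∑ v : ZMod p, χ v :=
    Fintype.sum_equiv (Equiv.subRight c) _ _ (fun v => rfl)
  rw [h]; exact quadraticChar_sum_zero (hFc hp2)

private lemma chi_mul_sum (hp2 : p ≠ 2) {e : ZMod p} (he : e ≠ 0) :
    ∑ v : ZMod p, χ v * χ (v - e) = -1 := by
  have hsq : χ e * χ e = 1 := by rw [← sq]; exact quadraticChar_sq_one he
  have h1 : ∑ v : ZMod p, χ v * χ (v - e) = ∑ v : ZMod p, χ v * χ (v - 1) := by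
    refine (Fintype.sum_equiv (Equiv.mulLeft₀ e he)
      (fun v => χ v * χ (v - 1)) (fun v => χ v * χ (v - e)) (fun v => ?_)).symm
    have h2 : (Equiv.mulLeft₀ e he) v = e * v := rfl
    show χ v * χ (v - 1) = χ (e * v) * χ (e * v - e)
    have h3 : e * v - e = e * (v - 1) := by ring
    rw [h3, map_mul, map_mul]
    linear_combination (-(χ v * χ (v - 1))) * hsq
  rw [h1]
  have hJ : jacobiSum χ χ = -(χ (-1)) := by
    have := jacobiSum_nontrivial_inv (quadraticChar_ne_one (hFc hp2))
    rwa [(quadraticChar_isQuadratic (ZMod p)).inv] at this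
  have hm1 : χ (-1) * χ (-1) = 1 := by
    rw [← sq]; exact quadraticChar_sq_one (neg_ne_zero.mpr one_ne_zero)
  calc ∑ v : ZMod p, χ v * χ (v - 1)
      = χ (-1) * ∑ v : ZMod p, χ v * χ (1 - v) := by
        rw [Finset.mul_sum]
        refine Finset.sum_congr rfl fun v _ => ?_
        have : (v - 1 : ZMod p) = -1 * (1 - v) := by ring
        rw [this, map_mul]; ring
    _ = χ (-1) * (-(χ (-1))) := by rw [← hJ]; rfl
    _ = -1 := by linear_combination -hm1

private lemma sum_sq_gen (hp2 : p ≠ 2) (g : ZMod p → ℤ) :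
    ∑ u : ZMod p, g (u ^ 2) = ∑ v : ZMod p, (χ v + 1) * g v := by
  rw [← Finset.sum_fiberwise' Finset.univ (fun u : ZMod p => u ^ 2) g]
  refine Finset.sum_congr rfl fun v _ => ?_
  rw [Finset.sum_const, nsmul_eq_mul]
  congr 1
  have hcard := quadraticChar_card_sqrts (hFc hp2) v
  rw [← hcard]
  congr 1
  rw [Set.toFinset_setOf]

private lemma sum_sq_sub (hp2 : p ≠ 2) {e : ZMod p} (he : e ≠ 0) :
    ∑ u : ZMod p, χ (u ^ 2 - e) = -1 := by
  rw [sum_sq_gen hp2 (fun v => χ (v - e))]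
  have : ∀ v : ZMod p, (χ v + 1) * χ (v - e) = χ v * χ (v - e) + χ (v - e) := by
    intro v; ring
  simp_rw [this]
  rw [Finset.sum_add_distrib, chi_mul_sum hp2 he, chi_shift e hp2, add_zero]

private lemma sum_sq' (hp2 : p ≠ 2) :
    ∑ u : ZMod p, χ (u ^ 2) = (p : ℤ) - 1 := by
  have h : ∀ u : ZMod p, χ (u ^ 2) = if u = 0 then 0 else 1 := by
    intro u
    by_cases hu : u = 0
    · simp [hu]
    · simp [hu, quadraticChar_sq_one' hu]
  simp_rw [h]
  have h2 : ∀ x : ZMod p, (if x = 0 then (0:ℤ) else 1) = 1 - (if x = 0 then 1 else 0) := by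
    intro x; split <;> ring
  simp_rw [h2]
  rw [Finset.sum_sub_distrib, Finset.sum_const,
    Finset.sum_ite_eq' Finset.univ (0 : ZMod p) (fun _ => (1:ℤ))]
  simp [ZMod.card]

private lemma nat_ne_zmod (hp : 3 < p) {n : ℕ} (h0 : 0 < n) (hn : n ≤ 4) :
    ((n : ℕ) : ZMod p) ≠ 0 := by
  rw [Ne, ZMod.natCast_eq_zero_iff]
  intro h
  have h1 := Nat.le_of_dvd h0 h
  have h4 : p = 4 := by omega
  have hpp : p.Prime := Fact.out
  rw [h4] at hpp
  exact absurd hpp (by norm_num)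

private lemma two_ne (hp : 3 < p) : (2 : ZMod p) ≠ 0 := by
  simpa using nat_ne_zmod hp (n := 2) (by norm_num) (by norm_num)

private lemma three_ne (hp : 3 < p) : (3 : ZMod p) ≠ 0 := by
  simpa using nat_ne_zmod hp (n := 3) (by norm_num) (by norm_num)

private lemma four_ne (hp : 3 < p) : (4 : ZMod p) ≠ 0 := by
  simpa using nat_ne_zmod hp (n := 4) (by norm_num) (by norm_num)

private lemma quad_sum (hp : 3 < p) {a : ZMod p} (b c : ZMod p) (ha : a ≠ 0) :
    ∑ t : ZMod p, χ (a * t ^ 2 + b * t + c)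
      = χ a * (if b ^ 2 - 4 * a * c = 0 then (p : ℤ) - 1 else -1) := by
  have hp2 : p ≠ 2 := by omega
  have h2 : (2 : ZMod p) ≠ 0 := two_ne hp
  have h2a : (2 * a : ZMod p) ≠ 0 := mul_ne_zero h2 ha
  have h4a : (4 * a : ZMod p) ≠ 0 := by
    have : (4 * a : ZMod p) = 2 * (2 * a) := by ring
    rw [this]; exact mul_ne_zero h2 h2a
  set d : ZMod p := b ^ 2 - 4 * a * c with hd
  -- key : reindexing
  have key : ∑ u : ZMod p, χ (u ^ 2 - d)
      = χ (4 * a) * ∑ t : ZMod p, χ (a * t ^ 2 + b * t + c) := by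
    have e : ZMod p ≃ ZMod p := (Equiv.mulLeft₀ (2 * a) h2a).trans (Equiv.addRight b)
    have h1 : ∑ u : ZMod p, χ (u ^ 2 - d)
        = ∑ t : ZMod p, χ ((2 * a * t + b) ^ 2 - d) := by
      refine (Fintype.sum_equiv ((Equiv.mulLeft₀ (2 * a) h2a).trans (Equiv.addRight b))
        (fun t => χ ((2 * a * t + b) ^ 2 - d)) (fun u => χ (u ^ 2 - d)) (fun t => rfl)).symm
    rw [h1, Finset.mul_sum]
    refine Finset.sum_congr rfl fun t _ => ?_
    have h3 : (2 * a * t + b) ^ 2 - d = (4 * a) * (a * t ^ 2 + b * t + c) := by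
      rw [hd]; ring
    rw [h3, map_mul]
  have hsq : χ (4 * a) * χ (4 * a) = 1 := by rw [← sq]; exact quadraticChar_sq_one h4a
  have h4 : χ (4 * a) = χ a := by
    have : (4 * a : ZMod p) = 2 ^ 2 * a := by ring
    rw [this, map_mul, quadraticChar_sq_one' h2, one_mul]
  have hS : ∑ t : ZMod p, χ (a * t ^ 2 + b * t + c) = χ (4 * a) * ∑ u : ZMod p, χ (u ^ 2 - d) := by
    rw [key]; linear_combination (-(∑ t : ZMod p, χ (a * t ^ 2 + b * t + c))) * hsq
  rw [hS, h4]
  by_cases hd0 : d = 0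
  · rw [if_pos hd0, hd0]
    simp only [sub_zero]
    rw [sum_sq' hp2]
  · rw [if_neg hd0, sum_sq_sub hp2 hd0]

private lemma main_sum (hp : 3 < p) :
    ∑ x : ZMod p, ∑ t : ZMod p, χ (x ^ 3 - t * x ^ 2 + x * t ^ 2 - t ^ 2)
      = (χ (-1) + χ 3) * (p : ℤ) := by
  have hp2 : p ≠ 2 := by omega
  have h3 : (3 : ZMod p) ≠ 0 := three_ne hp
  have h4 : (4 : ZMod p) ≠ 0 := four_ne hp
  set ι : ZMod p := 4 * (3 : ZMod p)⁻¹ with hιdef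
  have hι0 : ι ≠ 0 := mul_ne_zero h4 (inv_ne_zero h3)
  have h3ι : (3 : ZMod p) * ι = 4 := by
    rw [hιdef]
    calc (3 : ZMod p) * (4 * 3⁻¹) = 4 * (3 * 3⁻¹) := by ring
      _ = 4 := by rw [mul_inv_cancel₀ h3, mul_one]
  have h1ι : (1 : ZMod p) ≠ ι := by
    intro h
    rw [← h, mul_one] at h3ι
    have : (1 : ZMod p) = 0 := by linear_combination -h3ι
    exact one_ne_zero this
  have hι1' : ι - 1 = (3 : ZMod p)⁻¹ := by
    have h31 : (3 : ZMod p) * (ι - 1) = 1 := by rw [mul_sub, h3ι]; ring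
    field_simp
    linear_combination h31
  have hχ3i : χ ((3 : ZMod p)⁻¹) = χ 3 := by
    have h1 : (3 : ZMod p)⁻¹ = 3 * ((3 : ZMod p)⁻¹) ^ 2 := by
      field_simp
    rw [h1, map_mul, quadraticChar_sq_one' (inv_ne_zero h3), mul_one]
  have hx : ∀ x : ZMod p, (∑ t : ZMod p, χ (x ^ 3 - t * x ^ 2 + x * t ^ 2 - t ^ 2))
      = -χ (x - 1) + (if x = 0 then χ (-1) * (p : ℤ) else 0)
        + (if x = ι then χ 3 * (p : ℤ) else 0) := by
    intro x
    by_cases hx1 : x = 1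
    · subst hx1
      have hL : ∑ t : ZMod p, χ ((1:ZMod p) ^ 3 - t * 1 ^ 2 + 1 * t ^ 2 - t ^ 2)
          = ∑ t : ZMod p, χ t := by
        refine Fintype.sum_equiv (Equiv.subLeft 1) _ _ (fun t => ?_)
        have : (1:ZMod p) ^ 3 - t * 1 ^ 2 + 1 * t ^ 2 - t ^ 2 = 1 - t := by ring
        rw [this]; rfl
      rw [hL, quadraticChar_sum_zero (hFc hp2)]
      rw [if_neg one_ne_zero, if_neg h1ι, sub_self]
      simp
    · have hL : ∑ t : ZMod p, χ (x ^ 3 - t * x ^ 2 + x * t ^ 2 - t ^ 2)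
          = ∑ t : ZMod p, χ ((x - 1) * t ^ 2 + (-(x ^ 2)) * t + x ^ 3) :=
        Finset.sum_congr rfl fun t _ => by
          rw [show x ^ 3 - t * x ^ 2 + x * t ^ 2 - t ^ 2
            = (x - 1) * t ^ 2 + (-(x ^ 2)) * t + x ^ 3 from by ring]
      rw [hL, quad_sum hp (-(x ^ 2)) (x ^ 3) (sub_ne_zero.mpr hx1)]
      rw [show (-(x ^ 2)) ^ 2 - 4 * (x - 1) * x ^ 3 = x ^ 3 * (4 - 3 * x) from by ring]
      by_cases hx0 : x = 0
      · subst hx0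
        rw [if_pos (by ring), if_pos rfl, if_neg (fun h => hι0 h.symm)]
        ring
      · by_cases hxι : x = ι
        · subst hxι
          rw [if_pos (by rw [show (4 : ZMod p) - 3 * ι = 0 from by linear_combination -h3ι]; ring),
            if_neg hι0, if_pos rfl, hι1', hχ3i]
          ring
        · have hd : x ^ 3 * (4 - 3 * x) ≠ 0 := by
            refine mul_ne_zero (pow_ne_zero 3 hx0) ?_
            intro h0
            apply hxι
            have h4x : (3 : ZMod p) * x = 4 := by linear_combination -h0
            calc x = (3 : ZMod p)⁻¹ * (3 * x) := by
                    rw [← mul_assoc, inv_mul_cancel₀ h3, one_mul]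
              _ = (3 : ZMod p)⁻¹ * 4 := by rw [h4x]
              _ = ι := by rw [hιdef]; ring
          rw [if_neg hd, if_neg hx0, if_neg hxι]
          ring
  calc ∑ x : ZMod p, ∑ t : ZMod p, χ (x ^ 3 - t * x ^ 2 + x * t ^ 2 - t ^ 2)
      = ∑ x : ZMod p, (-χ (x - 1) + (if x = 0 then χ (-1) * (p : ℤ) else 0)
        + (if x = ι then χ 3 * (p : ℤ) else 0)) := Finset.sum_congr rfl fun x _ => hx x
    _ = (χ (-1) + χ 3) * (p : ℤ) := by
        rw [Finset.sum_add_distrib, Finset.sum_add_distrib]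
        rw [Finset.sum_ite_eq' Finset.univ (0 : ZMod p) (fun _ => χ (-1) * (p : ℤ))]
        rw [Finset.sum_ite_eq' Finset.univ ι (fun _ => χ 3 * (p : ℤ))]
        have : ∑ x : ZMod p, -χ (x - 1) = 0 := by
          rw [Finset.sum_neg_distrib, chi_shift 1 hp2, neg_zero]
        rw [this]
        simp only [Finset.mem_univ, if_true]
        ring

private lemma chi_neg_one_mod (hp : 3 < p) :
    χ (-1 : ZMod p) = ZMod.χ₄ ((p % 4 : ℕ)) := by
  have hp2 : p ≠ 2 := by omega
  have h := legendreSym.at_neg_one (p := p) hp2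
  simp only [legendreSym, Int.cast_neg, Int.cast_one] at h
  rw [h, ZMod.χ₄_nat_mod_four]

private lemma chi_three_eq (hp : 3 < p) :
    χ (3 : ZMod p) = (-1 : ℤ) ^ (p / 2) * legendreSym 3 ((p % 3 : ℕ) : ℤ) := by
  have hp2 : p ≠ 2 := by omega
  have h := legendreSym.quadratic_reciprocity' (p := 3) (q := p) (by norm_num) hp2
  norm_num at h
  have h3 : legendreSym p (3 : ℤ) = χ (3 : ZMod p) := by
    simp only [legendreSym]
    norm_num
  have hmod : legendreSym 3 ((p : ℕ) : ℤ) = legendreSym 3 ((p % 3 : ℕ) : ℤ) := by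
    rw [legendreSym.mod 3 ((p : ℕ) : ℤ)]
    norm_cast
  rw [← h3, h, hmod]

theorem first_moment_family_two' (hp : 3 < p) :
    (p % 12 = 1 →
      ∑ t : ZMod p,
        (-∑ x : ZMod p,
          legendreSym p ((x.val : ℤ) ^ 3 - (t.val : ℤ) * (x.val : ℤ) ^ 2
            + (x.val : ℤ) * (t.val : ℤ) ^ 2 - (t.val : ℤ) ^ 2)) = -2 * (p : ℤ)) ∧
    (p % 12 = 7 →
      ∑ t : ZMod p,
        (-∑ x : ZMod p,
          legendreSym p ((x.val : ℤ) ^ 3 - (t.val : ℤ) * (x.val : ℤ) ^ 2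
            + (x.val : ℤ) * (t.val : ℤ) ^ 2 - (t.val : ℤ) ^ 2)) = 2 * (p : ℤ)) ∧
    (p % 12 ≠ 1 → p % 12 ≠ 7 →
      ∑ t : ZMod p,
        (-∑ x : ZMod p,
          legendreSym p ((x.val : ℤ) ^ 3 - (t.val : ℤ) * (x.val : ℤ) ^ 2
            + (x.val : ℤ) * (t.val : ℤ) ^ 2 - (t.val : ℤ) ^ 2)) = 0) := by
  have hpp : p.Prime := Fact.out
  have hcast : ∀ (t x : ZMod p), legendreSym p ((x.val : ℤ) ^ 3 - (t.val : ℤ) * (x.val : ℤ) ^ 2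
      + (x.val : ℤ) * (t.val : ℤ) ^ 2 - (t.val : ℤ) ^ 2)
      = χ (x ^ 3 - t * x ^ 2 + x * t ^ 2 - t ^ 2) := by
    intro t x
    simp only [legendreSym]
    congr 1
    push_cast
    simp [ZMod.natCast_val, ZMod.cast_id]
  simp_rw [hcast]
  have hval : ∑ t : ZMod p, (-∑ x : ZMod p, χ (x ^ 3 - t * x ^ 2 + x * t ^ 2 - t ^ 2))
      = -((χ (-1) + χ 3) * (p : ℤ)) := by
    rw [Finset.sum_neg_distrib, Finset.sum_comm, main_sum hp]
  rw [hval]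
  have hpar : p / 2 % 2 = p % 4 / 2 := by
    have := (Nat.mod_mul_right_div_self p 2 2).symm
    simpa using this
  refine ⟨fun h1 => ?_, fun h7 => ?_, fun hn1 hn7 => ?_⟩
  · have hm4 : p % 4 = 1 := by omega
    have hm3 : p % 3 = 1 := by omega
    have c1 : χ (-1 : ZMod p) = 1 := by rw [chi_neg_one_mod hp, hm4]; decide
    have c3 : χ (3 : ZMod p) = 1 := by
      rw [chi_three_eq hp, hm3, (Nat.even_iff.mpr (by omega)).neg_one_pow]
      decide
    rw [c1, c3]; ring
  · have hm4 : p % 4 = 3 := by omega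
    have hm3 : p % 3 = 1 := by omega
    have c1 : χ (-1 : ZMod p) = -1 := by rw [chi_neg_one_mod hp, hm4]; decide
    have c3 : χ (3 : ZMod p) = -1 := by
      rw [chi_three_eq hp, hm3, (Nat.odd_iff.mpr (by omega)).neg_one_pow]
      decide
    rw [c1, c3]; ring
  · have e2 : p % 2 = 1 := hpp.eq_two_or_odd.resolve_left (by omega)
    have e3 : p % 3 ≠ 0 := by
      intro h
      have := hpp.eq_one_or_self_of_dvd 3 (Nat.dvd_of_mod_eq_zero h)
      omega
    have h511 : p % 12 = 5 ∨ p % 12 = 11 := by omega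
    rcases h511 with h5 | h11
    · have hm4 : p % 4 = 1 := by omega
      have hm3 : p % 3 = 2 := by omega
      have c1 : χ (-1 : ZMod p) = 1 := by rw [chi_neg_one_mod hp, hm4]; decide
      have c3 : χ (3 : ZMod p) = -1 := by
        rw [chi_three_eq hp, hm3, (Nat.even_iff.mpr (by omega)).neg_one_pow]
        decide
      rw [c1, c3]; ring
    · have hm4 : p % 4 = 3 := by omega
      have hm3 : p % 3 = 2 := by omega
      have c1 : χ (-1 : ZMod p) = -1 := by rw [chi_neg_one_mod hp, hm4]; decide
      have c3 : χ (3 : ZMod p) = 1 := by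
        rw [chi_three_eq hp, hm3, (Nat.odd_iff.mpr (by omega)).neg_one_pow]
        decide
      rw [c1, c3]; ring

end Aux

/-- For a prime `p > 3` and the family `y² = x³ - t x² + (x - 1) t²`,
the first-moment sum is `-2p` if `p ≡ 1 (mod 12)`, `2p` if `p ≡ 7 (mod 12)`, and
`0` otherwise, where `a_t(p) = -∑_{x mod p} χ(x³ - t x² + x t² - t²)`. -/
theorem first_moment_family_two (p : ℕ) [Fact p.Prime] (hp : 3 < p) :
    (p % 12 = 1 →
      ∑ t : ZMod p,
        (-∑ x : ZMod p,
          legendreSym p ((x.val : ℤ) ^ 3 - (t.val : ℤ) * (x.val : ℤ) ^ 2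
            + (x.val : ℤ) * (t.val : ℤ) ^ 2 - (t.val : ℤ) ^ 2)) = -2 * (p : ℤ)) ∧
    (p % 12 = 7 →
      ∑ t : ZMod p,
        (-∑ x : ZMod p,
          legendreSym p ((x.val : ℤ) ^ 3 - (t.val : ℤ) * (x.val : ℤ) ^ 2
            + (x.val : ℤ) * (t.val : ℤ) ^ 2 - (t.val : ℤ) ^ 2)) = 2 * (p : ℤ)) ∧
    (p % 12 ≠ 1 → p % 12 ≠ 7 →
      ∑ t : ZMod p,
        (-∑ x : ZMod p,
          legendreSym p ((x.val : ℤ) ^ 3 - (t.val : ℤ) * (x.val : ℤ) ^ 2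
            + (x.val : ℤ) * (t.val : ℤ) ^ 2 - (t.val : ℤ) ^ 2)) = 0) :=
  first_moment_family_two' hp
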